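/- Let {λ_k} ⊂ 𝔻 with ∑(1 − |λ_k|²) < ∞, T the diagonal operator T e_k = λ_k e_k on a Hilbert space H with orthonormal basis {e_k}, and h = ∑ √(1 − |λ_k|²) e_k. If {T^n h}_{n=0}^∞ is a frame for H, then {λ_k} satisfies the Carleson condition. -/

import Mathlib

open Filter Finset Topology
open scoped ComplexInnerProductSpace

section AuxPoly
open Polynomial

lemma aux_reflect_reflect (N : ℕ) (p : ℂ[X]) : reflect N (reflect N p) = p := by
  ext i
  simp [coeff_reflect, revAt_invol]

lemma aux_reflect_sum (N : ℕ) {ι : Type*} (s : Finset ι) (f : ι → ℂ[X]) :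
    reflect N (∑ i ∈ s, f i) = ∑ i ∈ s, reflect N (f i) := by
  ext j
  simp [coeff_reflect, finset_sum_coeff]

lemma aux_reflect_linear (a : ℂ) : reflect 1 (1 - C a * X) = X - C a := by
  have h1 : (1 - C a * X : ℂ[X]) = C 1 * X ^ 0 + C (-a) * X ^ 1 := by
    simp only [map_one, pow_zero, mul_one, map_neg, pow_one]
    ring
  rw [h1, reflect_add, reflect_C_mul_X_pow, reflect_C_mul_X_pow]
  have h2 : revAt 1 0 = 1 := revAt_zero 1
  have h3 : revAt 1 1 = 0 := revAt_le (le_refl 1)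
  rw [h2, h3]
  simp only [map_one, pow_one, pow_zero, mul_one, map_neg]
  ring

lemma aux_natDegree_linear_le (a : ℂ) : (1 - C a * X : ℂ[X]).natDegree ≤ 1 := by
  refine le_trans (natDegree_sub_le _ _) ?_
  simp only [natDegree_one, max_le_iff]
  exact ⟨Nat.zero_le 1, le_trans (natDegree_C_mul_le a X) (le_of_eq natDegree_X)⟩

lemma aux_natDegree_prod_le {ι : Type*} (s : Finset ι) (v : ι → ℂ) :
    (∏ i ∈ s, (1 - C (v i) * X)).natDegree ≤ s.card := by
  refine le_trans (natDegree_prod_le _ _) ?_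
  refine le_trans (Finset.sum_le_sum fun i _ => aux_natDegree_linear_le (v i)) ?_
  simp

lemma aux_reflect_prod {ι : Type*} [DecidableEq ι] (s : Finset ι) (v : ι → ℂ) :
    reflect s.card (∏ i ∈ s, (1 - C (v i) * X)) = ∏ i ∈ s, (X - C (v i)) := by
  classical
  induction s using Finset.induction_on with
  | empty =>
    simp only [card_empty, prod_empty]
    ext i
    simp [coeff_reflect]
  | insert a s' ha ih =>
    rw [prod_insert ha, prod_insert ha, card_insert_of_notMem ha,
      show s'.card + 1 = 1 + s'.card from Nat.add_comm _ _,
      reflect_mul _ _ (aux_natDegree_linear_le (v a)) (aux_natDegree_prod_le s' v),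
      aux_reflect_linear, ih]

lemma aux_PF (Fs : Finset ℕ) (v : ℕ → ℂ) (hinj : Set.InjOn v Fs) (hne : Fs.Nonempty)
    (Q : ℂ[X]) (hQdeg : Q.degree < Fs.card) (w : ℂ) (hw : ∀ i ∈ Fs, 1 - v i * w ≠ 0) :
    ∑ j ∈ Fs, (Q.eval (v j) / ∏ i ∈ Fs.erase j, (v j - v i)) * (1 - v j * w)⁻¹
      = (reflect (Fs.card - 1) Q).eval w / ∏ i ∈ Fs, (1 - v i * w) := by
  classical
  set m := Fs.card - 1 with hm
  have hcard : Fs.card = m + 1 := (Nat.succ_pred_eq_of_pos hne.card_pos).symm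
  set c : ℕ → ℂ := fun j => Q.eval (v j) / ∏ i ∈ Fs.erase j, (v j - v i) with hc
  have hprodne : ∀ j ∈ Fs, (∏ i ∈ Fs.erase j, (v j - v i)) ≠ 0 := by
    intro j hj
    refine Finset.prod_ne_zero_iff.mpr fun i hi => sub_ne_zero.mpr fun hvv => ?_
    exact (Finset.mem_erase.mp hi).1 (hinj (Finset.mem_of_mem_erase hi) hj hvv.symm)
  set P : ℂ[X] := ∑ j ∈ Fs, C (c j) * ∏ i ∈ Fs.erase j, (X - C (v i)) with hP
  have hPQ : Q = P := by
    refine Polynomial.eq_of_degrees_lt_of_eval_index_eq Fs hinj hQdeg ?_ ?_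
    · refine lt_of_le_of_lt (degree_sum_le _ _) ?_
      rw [Finset.sup_lt_iff (WithBot.bot_lt_coe _)]
      intro j hj
      refine lt_of_le_of_lt (degree_mul_le _ _) ?_
      have h1 : (∏ i ∈ Fs.erase j, (X - C (v i))).degree = ((Fs.erase j).card : WithBot ℕ) := by
        rw [degree_prod]
        simp [degree_X_sub_C]
      have h2 : (Fs.erase j).card = m := by
        rw [Finset.card_erase_of_mem hj, hcard, Nat.add_sub_cancel]
      calc (C (c j)).degree + (∏ i ∈ Fs.erase j, (X - C (v i))).degree
          ≤ 0 + ((Fs.erase j).card : WithBot ℕ) := add_le_add degree_C_le (le_of_eq h1)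
        _ = (m : WithBot ℕ) := by rw [zero_add, h2]
        _ < (Fs.card : WithBot ℕ) := by
            rw [hcard]; exact_mod_cast Nat.lt_succ_self m
    · intro j hj
      rw [hP, eval_finset_sum]
      rw [Finset.sum_eq_single_of_mem j hj ?_]
      · rw [eval_mul, eval_C, eval_prod]
        simp only [eval_sub, eval_X, eval_C]
        rw [hc]
        exact (div_mul_cancel₀ _ (hprodne j hj)).symm
      · intro t ht htj
        rw [eval_mul, eval_prod]
        refine mul_eq_zero_of_right _ ?_
        refine Finset.prod_eq_zero (Finset.mem_erase.mpr ⟨Ne.symm htj, hj⟩) ?_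
        simp only [eval_sub, eval_X, eval_C, sub_self]
  set L : ℂ[X] := ∑ j ∈ Fs, C (c j) * ∏ i ∈ Fs.erase j, (1 - C (v i) * X) with hL
  have hrefl : reflect m L = P := by
    rw [hL, aux_reflect_sum]
    refine Finset.sum_congr rfl fun j hj => ?_
    rw [reflect_C_mul]
    congr 1
    have h2 : (Fs.erase j).card = m := by
      rw [Finset.card_erase_of_mem hj, hcard, Nat.add_sub_cancel]
    rw [← h2, aux_reflect_prod]
  have hLQ : L = reflect m Q := by
    rw [hPQ, ← hrefl, aux_reflect_reflect]
  have heval : L.eval w = (reflect m Q).eval w := by rw [hLQ]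
  rw [hL, eval_finset_sum] at heval
  simp only [eval_mul, eval_C, eval_prod, eval_sub, eval_one, eval_X] at heval
  rw [← heval, Finset.sum_div]
  refine Finset.sum_congr rfl fun j hj => ?_
  have hD : (∏ i ∈ Fs, (1 - v i * w)) = (1 - v j * w) * ∏ i ∈ Fs.erase j, (1 - v i * w) :=
    (Finset.mul_prod_erase Fs _ hj).symm
  have h1 := hw j hj
  have h2 : (∏ i ∈ Fs.erase j, (1 - v i * w)) ≠ 0 :=
    Finset.prod_ne_zero_iff.mpr fun i hi => hw i (Finset.mem_of_mem_erase hi)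
  have h3 : (eval (v j) Q / ∏ i ∈ Fs.erase j, (v j - v i)) = c j := rfl
  rw [h3, hD]
  field_simp
  rw [mul_div_cancel_right₀ _ (by simp_rw [mul_comm w]; exact h2)]

end AuxPoly

set_option maxHeartbeats 1000000 in
/-- If the iterated system `{T^n h}` of the diagonal operator `T e_k = λ_k e_k` applied
to `h = ∑ √(1-|λ_k|²) e_k` is a frame, then `{λ k}` satisfies the Carleson condition. -/
theorem stmt_17 {H : Type*} [NormedAddCommGroup H] [InnerProductSpace ℂ H]
    [CompleteSpace H]
    (b : HilbertBasis ℕ ℂ H) (l : ℕ → ℂ) (hd : ∀ k, ‖l k‖ < 1)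
    (hsum : Summable (fun k => 1 - ‖l k‖ ^ 2))
    (T : H →L[ℂ] H) (hT : ∀ k, T (b k) = l k • b k)
    (h : H) (hh : HasSum (fun k => (Real.sqrt (1 - ‖l k‖ ^ 2) : ℂ) • b k) h)
    (hframe : ∃ A B : ℝ, 0 < A ∧ 0 < B ∧ ∀ x : H,
      A * ‖x‖ ^ 2 ≤ ∑' n : ℕ, ‖⟪x, (T ^ n) h⟫‖ ^ 2 ∧
      ∑' n : ℕ, ‖⟪x, (T ^ n) h⟫‖ ^ 2 ≤ B * ‖x‖ ^ 2) :
    ∃ δ : ℝ, 0 < δ ∧ ∀ (n : ℕ) (s : Finset ℕ), n ∉ s →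
      δ ≤ ∏ k ∈ s, ‖l k - l n‖ / ‖1 - (starRingEnd ℂ) (l k) * l n‖ := by
  classical
  obtain ⟨A, B, hA, hB, hfr⟩ := hframe
  have hbon : ∀ i k : ℕ, (⟪b i, b k⟫ : ℂ) = if i = k then (1:ℂ) else 0 := fun i k =>
    orthonormal_iff_ite.mp b.orthonormal i k
  have hlt : ∀ k, 0 < 1 - ‖l k‖^2 := fun k => by nlinarith [hd k, norm_nonneg (l k)]
  have hsq : ∀ k, (0:ℝ) < Real.sqrt (1 - ‖l k‖^2) := fun k => Real.sqrt_pos.mpr (hlt k)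
  have hsqc : ∀ k, ((Real.sqrt (1 - ‖l k‖^2) : ℝ) : ℂ) ≠ 0 := fun k => by
    exact_mod_cast (hsq k).ne'
  have hmc : ∀ z : ℂ, ((‖z‖^2 : ℝ) : ℂ) = z * (starRingEnd ℂ) z := by
    intro z; rw [Complex.mul_conj, Complex.sq_norm]
  have hTpow : ∀ (p : ℕ) (k : ℕ), (T ^ p) (b k) = (l k) ^ p • b k := by
    intro p
    induction p with
    | zero => intro k; simp
    | succ p ih =>
      intro k
      rw [pow_succ, ContinuousLinearMap.mul_apply, hT k, map_smul, ih k, smul_smul]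
      congr 1
      ring
  have hThp : ∀ p : ℕ, HasSum
      (fun k => (((Real.sqrt (1 - ‖l k‖^2) : ℝ) : ℂ) * (l k)^p) • b k) ((T ^ p) h) := by
    intro p
    have h0 := hh.mapL (T ^ p)
    have h1 : ∀ k : ℕ, (T ^ p) ((Real.sqrt (1 - ‖l k‖ ^ 2) : ℂ) • b k)
        = (((Real.sqrt (1 - ‖l k‖^2) : ℝ) : ℂ) * (l k)^p) • b k := by
      intro k
      rw [map_smul, hTpow, smul_smul]
    simpa only [h1] using h0
  have hxb : ∀ (c : ℕ → ℂ) (Fs : Finset ℕ) (k : ℕ),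
      (⟪∑ i ∈ Fs, c i • b i, b k⟫ : ℂ) = if k ∈ Fs then (starRingEnd ℂ) (c k) else 0 := by
    intro c Fs k
    rw [sum_inner]
    simp only [inner_smul_left, hbon, mul_ite, mul_one, mul_zero]
    simp [Finset.sum_ite_eq]
  have hinner : ∀ (c : ℕ → ℂ) (Fs : Finset ℕ) (p : ℕ),
      (⟪∑ i ∈ Fs, c i • b i, (T ^ p) h⟫ : ℂ)
        = ∑ k ∈ Fs, (starRingEnd ℂ) (c k) * (((Real.sqrt (1 - ‖l k‖^2) : ℝ) : ℂ) * (l k)^p) := by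
    intro c Fs p
    set x := ∑ i ∈ Fs, c i • b i with hxdef
    have h1 : HasSum
        (fun k => (((Real.sqrt (1 - ‖l k‖^2) : ℝ) : ℂ) * (l k)^p) * (⟪x, b k⟫ : ℂ))
        (⟪x, (T ^ p) h⟫ : ℂ) := by
      have h2 := (hThp p).mapL (innerSL ℂ x)
      simpa [innerSL_apply_apply, inner_smul_right] using h2
    rw [← h1.tsum_eq, tsum_eq_sum (s := Fs) ?_]
    · refine Finset.sum_congr rfl fun k hk => ?_
      rw [hxdef, hxb c Fs k, if_pos hk]
      ring
    · intro k hk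
      rw [hxdef, hxb c Fs k, if_neg hk, mul_zero]
  have hnormx : ∀ (c : ℕ → ℂ) (Fs : Finset ℕ),
      ‖∑ i ∈ Fs, c i • b i‖^2 = ∑ i ∈ Fs, ‖c i‖^2 := by
    intro c Fs
    have h1 : (⟪∑ i ∈ Fs, c i • b i, ∑ i ∈ Fs, c i • b i⟫ : ℂ)
        = ∑ i ∈ Fs, (starRingEnd ℂ) (c i) * c i := b.orthonormal.inner_sum c c Fs
    have h2 : (⟪∑ i ∈ Fs, c i • b i, ∑ i ∈ Fs, c i • b i⟫ : ℂ)
        = ((‖∑ i ∈ Fs, c i • b i‖ : ℝ) : ℂ)^2 := inner_self_eq_norm_sq_to_K _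
    have h3 : ∑ i ∈ Fs, (starRingEnd ℂ) (c i) * c i = ((∑ i ∈ Fs, ‖c i‖^2 : ℝ) : ℂ) := by
      rw [Complex.ofReal_sum]
      refine Finset.sum_congr rfl fun i _ => ?_
      rw [hmc (c i)]
      ring
    have h4 : ((‖∑ i ∈ Fs, c i • b i‖^2 : ℝ) : ℂ) = ((∑ i ∈ Fs, ‖c i‖^2 : ℝ) : ℂ) := by
      push_cast
      rw [← h2, h1, h3]
      push_cast
      ring
    exact_mod_cast h4
  -- injectivity of l
  have hinjl : Function.Injective l := by
    intro j k hjk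
    by_contra hne
    set c : ℕ → ℂ := fun i => if i = j then 1 else -1 with hcdef
    set x := ∑ i ∈ ({j, k} : Finset ℕ), c i • b i with hxdef
    have hx2 : ‖x‖^2 = 2 := by
      rw [hxdef, hnormx, Finset.sum_pair hne]
      have hkj : ¬ (k = j) := fun hh0 => hne hh0.symm
      simp [hcdef, hkj]
      norm_num
    have hzero : ∀ p, (⟪x, (T ^ p) h⟫ : ℂ) = 0 := by
      intro p
      rw [hxdef, hinner, Finset.sum_pair hne]
      have hkj : ¬ (k = j) := fun hh0 => hne hh0.symm
      have hnn : ‖l j‖ = ‖l k‖ := by rw [hjk]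
      simp only [hcdef, if_pos rfl, if_neg hkj, map_one, map_neg, hjk, hnn]
      ring
    have h2 := (hfr x).1
    rw [hx2] at h2
    simp only [hzero] at h2
    simp only [norm_zero] at h2
    rw [show ((0:ℝ)^2 : ℝ) = 0 by norm_num] at h2
    rw [tsum_zero] at h2
    nlinarith
  -- main part
  refine ⟨Real.sqrt A, Real.sqrt_pos.mpr hA, ?_⟩
  intro n s hns
  set Fs : Finset ℕ := insert n s with hFsdef
  have hnF : n ∈ Fs := Finset.mem_insert_self n s
  have hers : Fs.erase n = s := Finset.erase_insert hns
  have hcard : Fs.card = s.card + 1 := Finset.card_insert_of_notMem hns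
  have hmlt : ∀ i k : ℕ, ‖l i * (starRingEnd ℂ) (l k)‖ < 1 := by
    intro i k
    rw [norm_mul, RCLike.norm_conj]
    nlinarith [hd i, hd k, norm_nonneg (l i), norm_nonneg (l k)]
  have hne1 : ∀ i k : ℕ, (1 : ℂ) - l i * (starRingEnd ℂ) (l k) ≠ 0 := by
    intro i k hcon
    have h0 : (1 : ℂ) = l i * (starRingEnd ℂ) (l k) := sub_eq_zero.mp hcon
    have h1 := hmlt i k
    rw [← h0] at h1
    simp at h1
  have hne2 : ∀ i k : ℕ, (1:ℂ) - (starRingEnd ℂ) (l i) * l k ≠ 0 := by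
    intro i k hcon
    apply hne1 i k
    have h0 : (starRingEnd ℂ) ((1:ℂ) - (starRingEnd ℂ) (l i) * l k) = 0 := by
      rw [hcon, map_zero]
    simpa using h0
  have hnormconj : ∀ i k : ℕ,
      ‖(1:ℂ) - l i * (starRingEnd ℂ) (l k)‖ = ‖(1:ℂ) - (starRingEnd ℂ) (l i) * l k‖ := by
    intro i k
    rw [← RCLike.norm_conj (K := ℂ) ((1:ℂ) - l i * (starRingEnd ℂ) (l k))]
    congr 1
    simp [map_sub, map_mul]
  have hlkn : ∀ k ∈ s, l k ≠ l n := by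
    intro k hk h0
    exact hns (hinjl h0 ▸ hk)
  set a : ℕ → ℂ := fun j =>
    (∏ k ∈ s, (1 - (starRingEnd ℂ) (l k) * l j)) / (∏ i ∈ Fs.erase j, (l j - l i)) with ha
  set c : ℕ → ℂ := fun j => (starRingEnd ℂ) (a j) / ((Real.sqrt (1 - ‖l j‖^2) : ℝ) : ℂ) with hc
  set x := ∑ i ∈ Fs, c i • b i with hx
  have hg : ∀ p, (⟪x, (T ^ p) h⟫ : ℂ) = ∑ k ∈ Fs, a k * (l k)^p := by
    intro p
    rw [hx, hinner]
    refine Finset.sum_congr rfl fun k hk => ?_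
    rw [hc]
    simp only [map_div₀, Complex.conj_conj, Complex.conj_ofReal]
    rw [div_mul_eq_mul_div, mul_comm (((Real.sqrt (1 - ‖l k‖^2) : ℝ) : ℂ)) ((l k)^p),
      ← mul_assoc, mul_div_assoc, div_self (hsqc k), mul_one]
  set Z : ℂ := ∑ j ∈ Fs, ∑ k ∈ Fs, (a j * (starRingEnd ℂ) (a k)) *
      ((1:ℂ) - l j * (starRingEnd ℂ) (l k))⁻¹ with hZ
  have hZsum : HasSum (fun p => ((‖∑ k ∈ Fs, a k * (l k)^p‖^2 : ℝ) : ℂ)) Z := by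
    have key : ∀ p, ((‖∑ k ∈ Fs, a k * (l k)^p‖^2 : ℝ) : ℂ)
        = ∑ j ∈ Fs, ∑ k ∈ Fs, (a j * (starRingEnd ℂ) (a k)) * (l j * (starRingEnd ℂ) (l k))^p := by
      intro p
      rw [hmc, map_sum, Finset.sum_mul_sum]
      refine Finset.sum_congr rfl fun j hj => Finset.sum_congr rfl fun k hk => ?_
      simp only [map_mul, map_pow]
      rw [mul_pow]
      ring
    rw [show (fun p => ((‖∑ k ∈ Fs, a k * (l k)^p‖^2 : ℝ) : ℂ)) = fun p =>
        ∑ j ∈ Fs, ∑ k ∈ Fs, (a j * (starRingEnd ℂ) (a k)) * (l j * (starRingEnd ℂ) (l k))^p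
        from funext key]
    rw [hZ]
    refine hasSum_sum fun j hj => ?_
    refine hasSum_sum fun k hk => ?_
    exact (hasSum_geometric_of_norm_lt_one (hmlt j k)).mul_left _
  have hS : HasSum (fun p => ‖(⟪x, (T ^ p) h⟫ : ℂ)‖^2) Z.re := by
    have h0 := hZsum.mapL Complex.reCLM
    simp only [Complex.reCLM_apply, Complex.ofReal_re] at h0
    have h1 : (fun p => ‖(⟪x, (T ^ p) h⟫ : ℂ)‖^2) = fun p => ‖∑ k ∈ Fs, a k * (l k)^p‖^2 := by
      funext p
      rw [hg p]
    rw [h1]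
    exact h0
  -- apply the partial fraction lemma
  set Q : Polynomial ℂ := ∏ k ∈ s, (1 - Polynomial.C ((starRingEnd ℂ) (l k)) * Polynomial.X)
    with hQ
  have hQdeg : Q.degree < (Fs.card : WithBot ℕ) := by
    have hnat : Q.natDegree ≤ s.card := aux_natDegree_prod_le s _
    refine lt_of_le_of_lt Polynomial.degree_le_natDegree ?_
    rw [hcard]
    exact_mod_cast Nat.lt_succ_of_le hnat
  have hQeval : ∀ j : ℕ, Q.eval (l j) = ∏ k ∈ s, (1 - (starRingEnd ℂ) (l k) * l j) := by
    intro j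
    rw [hQ, Polynomial.eval_prod]
    simp
  have hrefl : Polynomial.reflect (Fs.card - 1) Q
      = ∏ k ∈ s, (Polynomial.X - Polynomial.C ((starRingEnd ℂ) (l k))) := by
    rw [hcard, Nat.add_sub_cancel, hQ, ← aux_reflect_prod s (fun k => (starRingEnd ℂ) (l k))]
  have hinjF : Set.InjOn l Fs := fun p _ q _ hpq => hinjl hpq
  have hPF : ∀ k0 ∈ Fs, (∑ j ∈ Fs, a j * ((1:ℂ) - l j * (starRingEnd ℂ) (l k0))⁻¹)
      = (∏ t ∈ s, ((starRingEnd ℂ) (l k0) - (starRingEnd ℂ) (l t)))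
        / ∏ i ∈ Fs, ((1:ℂ) - l i * (starRingEnd ℂ) (l k0)) := by
    intro k0 hk0
    have h0 := aux_PF Fs l hinjF ⟨n, hnF⟩ Q hQdeg ((starRingEnd ℂ) (l k0))
      (fun i _ => hne1 i k0)
    rw [hrefl] at h0
    simp only [Polynomial.eval_prod, Polynomial.eval_sub, Polynomial.eval_X,
      Polynomial.eval_C] at h0
    rw [← h0]
    refine Finset.sum_congr rfl fun j hj => ?_
    rw [ha]
    simp only
    rw [hQeval]
  have hZval : Z = (starRingEnd ℂ) (a n) *
      ((∏ t ∈ s, ((starRingEnd ℂ) (l n) - (starRingEnd ℂ) (l t)))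
        / ∏ i ∈ Fs, ((1:ℂ) - l i * (starRingEnd ℂ) (l n))) := by
    rw [hZ, Finset.sum_comm]
    have h1 : ∀ k0 ∈ Fs, ∑ j ∈ Fs, (a j * (starRingEnd ℂ) (a k0)) *
        ((1:ℂ) - l j * (starRingEnd ℂ) (l k0))⁻¹
        = (starRingEnd ℂ) (a k0) *
          ((∏ t ∈ s, ((starRingEnd ℂ) (l k0) - (starRingEnd ℂ) (l t)))
            / ∏ i ∈ Fs, ((1:ℂ) - l i * (starRingEnd ℂ) (l k0))) := by
      intro k0 hk0
      rw [← hPF k0 hk0, Finset.mul_sum]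
      exact Finset.sum_congr rfl fun j hj => by ring
    rw [Finset.sum_congr rfl h1]
    rw [show Fs = insert n s from hFsdef, Finset.sum_insert hns]
    have h2 : ∀ k0 ∈ s, (starRingEnd ℂ) (a k0) *
        ((∏ t ∈ s, ((starRingEnd ℂ) (l k0) - (starRingEnd ℂ) (l t)))
          / ∏ i ∈ (insert n s : Finset ℕ), ((1:ℂ) - l i * (starRingEnd ℂ) (l k0))) = 0 := by
      intro k0 hk0
      have h3 : (∏ t ∈ s, ((starRingEnd ℂ) (l k0) - (starRingEnd ℂ) (l t))) = 0 :=
        Finset.prod_eq_zero hk0 (sub_self _)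
      rw [h3, zero_div, mul_zero]
    rw [Finset.sum_eq_zero h2, add_zero]
  -- norms
  set N1 : ℝ := ∏ k ∈ s, ‖l k - l n‖ with hN1
  set D1 : ℝ := ∏ k ∈ s, ‖(1:ℂ) - (starRingEnd ℂ) (l k) * l n‖ with hD1
  have hN1pos : 0 < N1 := Finset.prod_pos fun k hk =>
    norm_pos_iff.mpr (sub_ne_zero.mpr (hlkn k hk))
  have hD1pos : 0 < D1 := Finset.prod_pos fun k hk => norm_pos_iff.mpr (hne2 k n)
  have hani : ‖a n‖ = D1 / N1 := by
    rw [ha]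
    simp only
    rw [norm_div, norm_prod, norm_prod, hers, hN1, hD1]
    congr 1
    exact Finset.prod_congr rfl fun i _ => norm_sub_rev _ _
  have hWn : ‖(∏ t ∈ s, ((starRingEnd ℂ) (l n) - (starRingEnd ℂ) (l t)))
      / ∏ i ∈ Fs, ((1:ℂ) - l i * (starRingEnd ℂ) (l n))‖
      = N1 / ((1 - ‖l n‖^2) * D1) := by
    rw [norm_div, norm_prod, norm_prod]
    congr 1
    · rw [hN1]
      refine Finset.prod_congr rfl fun t ht => ?_
      rw [show (starRingEnd ℂ) (l n) - (starRingEnd ℂ) (l t)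
          = (starRingEnd ℂ) (l n - l t) from (map_sub _ _ _).symm, RCLike.norm_conj,
        norm_sub_rev]
    · rw [show Fs = insert n s from hFsdef, Finset.prod_insert hns]
      congr 1
      · have h0 : (1:ℂ) - l n * (starRingEnd ℂ) (l n) = ((1 - ‖l n‖^2 : ℝ) : ℂ) := by
          rw [Complex.mul_conj, Complex.ofReal_sub, Complex.ofReal_one]
          congr 2
          rw [Complex.sq_norm]
        rw [h0, Complex.norm_real, Real.norm_eq_abs, abs_of_pos (hlt n)]
      · rw [hD1]
        exact Finset.prod_congr rfl fun i _ => hnormconj i n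
  have hZnorm : ‖Z‖ = 1 / (1 - ‖l n‖^2) := by
    rw [hZval, norm_mul, RCLike.norm_conj, hani, hWn]
    rw [div_mul_div_comm]
    rw [div_eq_div_iff (mul_pos hN1pos (mul_pos (hlt n) hD1pos)).ne' (hlt n).ne']
    ring
  have hcn : ‖c n‖^2 = ‖a n‖^2 / (1 - ‖l n‖^2) := by
    rw [hc]
    simp only
    rw [norm_div, RCLike.norm_conj, Complex.norm_real, Real.norm_eq_abs,
      abs_of_pos (hsq n), div_pow, Real.sq_sqrt (hlt n).le]
  have hxge : ‖c n‖^2 ≤ ‖x‖^2 := by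
    rw [hx, hnormx]
    exact Finset.single_le_sum (f := fun i => ‖c i‖^2) (fun i _ => sq_nonneg _) hnF
  have hchain : A * (‖a n‖^2 / (1 - ‖l n‖^2)) ≤ 1 / (1 - ‖l n‖^2) := by
    calc A * (‖a n‖^2 / (1 - ‖l n‖^2)) = A * ‖c n‖^2 := by rw [hcn]
      _ ≤ A * ‖x‖^2 := mul_le_mul_of_nonneg_left hxge hA.le
      _ ≤ ∑' p, ‖(⟪x, (T ^ p) h⟫ : ℂ)‖^2 := (hfr x).1
      _ = Z.re := hS.tsum_eq
      _ ≤ ‖Z‖ := by exact Complex.re_le_norm Z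
      _ = 1 / (1 - ‖l n‖^2) := hZnorm
  have hfin : A * ‖a n‖^2 ≤ 1 := by
    rw [← mul_div_assoc] at hchain
    exact (div_le_div_iff_of_pos_right (hlt n)).mp hchain
  have hP2 : A ≤ (N1 / D1)^2 := by
    rw [hani, div_pow, ← mul_div_assoc, div_le_one (pow_pos hN1pos 2)] at hfin
    rw [div_pow, le_div_iff₀ (pow_pos hD1pos 2)]
    exact hfin
  have hPle : Real.sqrt A ≤ N1 / D1 := by
    calc Real.sqrt A ≤ Real.sqrt ((N1/D1)^2) := Real.sqrt_le_sqrt hP2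
      _ = N1 / D1 := Real.sqrt_sq (le_of_lt (div_pos hN1pos hD1pos))
  calc Real.sqrt A ≤ N1 / D1 := hPle
    _ = ∏ k ∈ s, ‖l k - l n‖ / ‖1 - (starRingEnd ℂ) (l k) * l n‖ := by
        rw [hN1, hD1, ← Finset.prod_div_distrib]
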